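/- The complex of phylogenetic trees Θ(n) is a pure flag simplicial complex of dimension n−4, whose faces are in bijection with phylogenetic trees with n labeled leaves, and whose facets correspond to trivalent trees (all internal vertices of degree 3), which have exactly n−3 internal edges. -/

import Mathlib

/-- Laminar compatibility of two finite sets. -/
def lcompat {α : Type*} [DecidableEq α] (A B : Finset α) : Prop :=
  A ∩ B = ∅ ∨ A ⊆ B ∨ B ⊆ A

lemma lcompat_symm {α : Type*} [DecidableEq α] {A B : Finset α}
    (h : lcompat A B) : lcompat B A := by
  rcases h with h | h | h
  · exact Or.inl (by rwa [Finset.inter_comm])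
  · exact Or.inr (Or.inr h)
  · exact Or.inr (Or.inl h)

/-- A maximal laminar family of subsets of `S` with cardinalities in `[2, |S|-1]`
has exactly `|S| - 2` members. -/
lemma laminar_max_card {α : Type*} [DecidableEq α] :
    ∀ m : ℕ, 3 ≤ m → ∀ S : Finset α, S.card = m →
    ∀ F : Finset (Finset α),
      (∀ A ∈ F, A ⊆ S ∧ 2 ≤ A.card ∧ A.card ≤ m - 1) →
      (∀ A ∈ F, ∀ B ∈ F, lcompat A B) →
      (∀ B : Finset α, B ⊆ S → 2 ≤ B.card → B.card ≤ m - 1 →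
        (∀ A ∈ F, lcompat A B) → B ∈ F) →
      F.card = m - 2 := by
  intro m hm
  induction m, hm using Nat.le_induction with
  | base =>
    intro S hS F hmem hcomp hmax
    -- every member has card 2; any two members coincide; F nonempty
    obtain ⟨T, hTS, hT2⟩ : ∃ T, T ⊆ S ∧ T.card = 2 := by
      exact Finset.exists_subset_card_eq (s := S) (n := 2) (by omega)
    have hne : F.Nonempty := by
      by_contra h
      rw [Finset.not_nonempty_iff_eq_empty] at h
      have := hmax T hTS (by omega) (by omega) (by simp [h])
      simp [h] at this
    obtain ⟨A, hA⟩ := hne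
    have hcard1 : F = {A} := by
      apply Finset.eq_singleton_iff_unique_mem.mpr
      refine ⟨hA, fun B hB => ?_⟩
      obtain ⟨hBS, hB2, hB3⟩ := hmem B hB
      obtain ⟨hAS, hA2, hA3⟩ := hmem A hA
      have hBc : B.card = 2 := by omega
      have hAc : A.card = 2 := by omega
      rcases hcomp B hB A hA with h | h | h
      · exfalso
        have : (B ∪ A).card ≤ S.card := Finset.card_le_card (Finset.union_subset hBS hAS)
        have : (B ∪ A).card = B.card + A.card := by
          rw [Finset.card_union_of_disjoint (Finset.disjoint_iff_inter_eq_empty.mpr h)]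
        omega
      · exact Finset.eq_of_subset_of_card_le h (by omega)
      · exact (Finset.eq_of_subset_of_card_le h (by omega)).symm
    simp [hcard1]
  | succ m hm3 IH =>
    intro S hS F hmem hcomp hmax
    -- F is nonempty
    obtain ⟨T, hTS, hT2⟩ : ∃ T, T ⊆ S ∧ T.card = 2 := by
      exact Finset.exists_subset_card_eq (s := S) (n := 2) (by omega)
    have hne : F.Nonempty := by
      by_contra h
      rw [Finset.not_nonempty_iff_eq_empty] at h
      have := hmax T hTS (by omega) (by omega) (by simp [h])
      simp [h] at this
    -- pick member of minimal cardinality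
    obtain ⟨M, hM, hMmin⟩ := Finset.exists_min_image F Finset.card hne
    obtain ⟨hMS, hM2, hMle⟩ := hmem M hM
    -- M has cardinality 2
    have hMc : M.card = 2 := by
      by_contra hc
      have hM3 : 3 ≤ M.card := by omega
      obtain ⟨T', hT'M, hT'2⟩ := Finset.exists_subset_card_eq (s := M) (n := 2) (by omega)
      have hT'F : T' ∈ F := by
        apply hmax T' (hT'M.trans hMS) (by omega) (by omega)
        intro A hA
        rcases hcomp A hA M hM with h | h | h
        · exact Or.inl (by
            have : A ∩ T' ⊆ A ∩ M := Finset.inter_subset_inter le_rfl hT'M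
            rw [h] at this
            exact Finset.subset_empty.mp this)
        · -- A ⊆ M, minimality forces A = M
          have := hMmin A hA
          have hAM : A = M := Finset.eq_of_subset_of_card_le h
            (by have := hMmin A hA; omega)
          exact Or.inr (Or.inr (hAM ▸ hT'M))
        · exact Or.inr (Or.inr (hT'M.trans h))
      have := hMmin T' hT'F
      omega
    obtain ⟨x, y, hxy, hMxy⟩ := Finset.card_eq_two.mp hMc
    have hxM : x ∈ M := by rw [hMxy]; simp
    have hyM : y ∈ M := by rw [hMxy]; simp
    have hxS : x ∈ S := hMS hxM
    have hyS : y ∈ S := hMS hyM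
    -- dichotomy for other members
    have hdich : ∀ B ∈ F, B ≠ M → M ⊆ B ∨ M ∩ B = ∅ := by
      intro B hB hBM
      rcases hcomp M hM B hB with h | h | h
      · exact Or.inr h
      · exact Or.inl h
      · exfalso
        obtain ⟨_, hB2, _⟩ := hmem B hB
        exact hBM (Finset.eq_of_subset_of_card_le h (by omega))
    have hxyB : ∀ B ∈ F, B ≠ M → (x ∈ B ↔ y ∈ B) := by
      intro B hB hBM
      rcases hdich B hB hBM with h | h
      · exact ⟨fun _ => h hyM, fun _ => h hxM⟩
      · constructor
        · intro hx; exact absurd (Finset.mem_inter.mpr ⟨hxM, hx⟩) (by simp [h])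
        · intro hy; exact absurd (Finset.mem_inter.mpr ⟨hyM, hy⟩) (by simp [h])
    -- contract: remove y
    set S' : Finset α := S.erase y with hS'
    have hS'card : S'.card = m := by
      rw [hS', Finset.card_erase_of_mem hyS, hS]
      omega
    set f : Finset α → Finset α := fun B => B.erase y with hf
    set F' : Finset (Finset α) := (F.erase M).image f with hF'
    have hinj : ∀ B ∈ F.erase M, ∀ C ∈ F.erase M, f B = f C → B = C := by
      intro B hB C hC hfBC
      rw [Finset.mem_erase] at hB hC
      have hyB : y ∈ B ↔ y ∈ C := by
        rw [← hxyB B hB.2 hB.1, ← hxyB C hC.2 hC.1]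
        constructor
        · intro hx
          have : x ∈ f B := Finset.mem_erase.mpr ⟨hxy, hx⟩
          rw [hfBC] at this
          exact (Finset.mem_erase.mp this).2
        · intro hx
          have : x ∈ f C := Finset.mem_erase.mpr ⟨hxy, hx⟩
          rw [← hfBC] at this
          exact (Finset.mem_erase.mp this).2
      ext z
      by_cases hz : z = y
      · subst hz; exact hyB
      · constructor
        · intro h
          have : z ∈ f B := Finset.mem_erase.mpr ⟨hz, h⟩
          rw [hfBC] at this
          exact (Finset.mem_erase.mp this).2
        · intro h
          have : z ∈ f C := Finset.mem_erase.mpr ⟨hz, h⟩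
          rw [← hfBC] at this
          exact (Finset.mem_erase.mp this).2
    have hF'card : F'.card = F.card - 1 := by
      rw [hF', Finset.card_image_of_injOn hinj, Finset.card_erase_of_mem hM]
    -- memberships for F'
    have hmem' : ∀ A ∈ F', A ⊆ S' ∧ 2 ≤ A.card ∧ A.card ≤ m - 1 := by
      intro A hA
      rw [hF', Finset.mem_image] at hA
      obtain ⟨B, hB, rfl⟩ := hA
      rw [Finset.mem_erase] at hB
      obtain ⟨hBM, hBF⟩ := hB
      obtain ⟨hBS, hB2, hBle⟩ := hmem B hBF
      refine ⟨Finset.erase_subset_erase y hBS, ?_, ?_⟩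
      · by_cases hyB : y ∈ B
        · have hMB : M ⊆ B := by
            rcases hdich B hBF hBM with h | h
            · exact h
            · exact absurd (Finset.mem_inter.mpr ⟨hyM, hyB⟩) (by simp [h])
          have hB3 : 3 ≤ B.card := by
            rcases lt_or_eq_of_le (Finset.card_le_card hMB) with h | h
            · omega
            · exact absurd (Finset.eq_of_subset_of_card_le hMB (le_of_eq h.symm)).symm hBM
          rw [hf]; simp only []
          rw [Finset.card_erase_of_mem hyB]; omega
        · rw [hf]; simp only []
          rw [Finset.erase_eq_of_notMem hyB]; omega
      · by_cases hyB : y ∈ B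
        · rw [hf]; simp only []
          rw [Finset.card_erase_of_mem hyB]; omega
        · rw [hf]; simp only []
          rw [Finset.erase_eq_of_notMem hyB]
          -- need B.card ≤ m - 1; suppose B.card = m
          by_contra hc
          have hBm : B.card = m := by omega
          have hBS' : B ⊆ S.erase y := Finset.subset_erase.mpr ⟨hBS, hyB⟩
          have : B = S.erase y := Finset.eq_of_subset_of_card_le hBS' (by
            rw [Finset.card_erase_of_mem hyS, hS]; omega)
          have hxB : x ∈ B := by
            rw [this]; exact Finset.mem_erase.mpr ⟨hxy, hxS⟩
          have := (hxyB B hBF hBM).mp hxB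
          exact hyB this
    -- compatibility for F'
    have hcomp' : ∀ A ∈ F', ∀ B ∈ F', lcompat A B := by
      intro A hA B hB
      rw [hF', Finset.mem_image] at hA hB
      obtain ⟨A0, hA0, rfl⟩ := hA
      obtain ⟨B0, hB0, rfl⟩ := hB
      rw [Finset.mem_erase] at hA0 hB0
      rcases hcomp A0 hA0.2 B0 hB0.2 with h | h | h
      · refine Or.inl ?_
        rw [hf]; simp only []
        have : A0.erase y ∩ B0.erase y ⊆ A0 ∩ B0 :=
          Finset.inter_subset_inter (Finset.erase_subset y A0) (Finset.erase_subset y B0)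
        rw [h] at this
        exact Finset.subset_empty.mp this
      · exact Or.inr (Or.inl (Finset.erase_subset_erase y h))
      · exact Or.inr (Or.inr (Finset.erase_subset_erase y h))
    -- maximality for F'
    have hmax' : ∀ B : Finset α, B ⊆ S' → 2 ≤ B.card → B.card ≤ m - 1 →
        (∀ A ∈ F', lcompat A B) → B ∈ F' := by
      intro D hDS' hD2 hDle hDcomp
      have hyD : y ∉ D := fun h => (Finset.mem_erase.mp (hDS' h)).1 rfl
      set Dh : Finset α := if x ∈ D then insert y D else D with hDh
      have hDsub : D ⊆ Dh := by
        rw [hDh]; split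
        · exact Finset.subset_insert y D
        · exact subset_rfl
      have hDhS : Dh ⊆ S := by
        rw [hDh]; split
        · exact Finset.insert_subset hyS (hDS'.trans (Finset.erase_subset y S))
        · exact hDS'.trans (Finset.erase_subset y S)
      have hDhcard : Dh.card ≤ D.card + 1 := by
        rw [hDh]; split
        · exact Finset.card_insert_le y D
        · omega
      have hDh2 : 2 ≤ Dh.card := le_trans hD2 (Finset.card_le_card hDsub)
      have hDhle : Dh.card ≤ (m + 1) - 1 := by omega
      have hyDh : y ∈ Dh ↔ x ∈ D := by
        rw [hDh]
        constructor
        · intro h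
          by_contra hx
          simp only [if_neg hx] at h
          exact hyD h
        · intro h; simp only [if_pos h]; exact Finset.mem_insert_self y D
      have hzDh : ∀ z, z ≠ y → (z ∈ Dh ↔ z ∈ D) := by
        intro z hz
        rw [hDh]
        split
        · simp [Finset.mem_insert, hz]
        · rfl
      -- Dh is compatible with everything in F
      have hDhcomp : ∀ A ∈ F, lcompat A Dh := by
        intro B hB
        by_cases hBM : B = M
        · subst hBM
          by_cases hx : x ∈ D
          · refine Or.inr (Or.inl ?_)
            rw [hMxy]
            intro z hz
            rcases Finset.mem_insert.mp hz with rfl | hz'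
            · exact hDsub hx
            · rw [Finset.mem_singleton] at hz'
              subst hz'
              exact hyDh.mpr hx
          · refine Or.inl ?_
            rw [Finset.eq_empty_iff_forall_notMem]
            intro z hz
            rw [Finset.mem_inter] at hz
            obtain ⟨hz1, hz2⟩ := hz
            rw [hMxy, Finset.mem_insert, Finset.mem_singleton] at hz1
            rcases hz1 with h1 | h1
            · subst h1; exact hx ((hzDh z hxy).mp hz2)
            · subst h1; exact hx (hyDh.mp hz2)
        · have hBF' : f B ∈ F' := by
            rw [hF', Finset.mem_image]
            exact ⟨B, Finset.mem_erase.mpr ⟨hBM, hB⟩, rfl⟩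
          have hxyB' := hxyB B hB hBM
          rcases hDcomp (f B) hBF' with h | h | h
          · refine Or.inl ?_
            rw [Finset.eq_empty_iff_forall_notMem]
            intro z hz
            rw [Finset.mem_inter] at hz
            obtain ⟨hzB, hzD⟩ := hz
            by_cases hzy : z = y
            · subst hzy
              have hxB : x ∈ f B := Finset.mem_erase.mpr ⟨hxy, hxyB'.mpr hzB⟩
              have hxD : x ∈ D := hyDh.mp hzD
              exact absurd (Finset.mem_inter.mpr ⟨hxB, hxD⟩) (by simp [h])
            · have : z ∈ f B := Finset.mem_erase.mpr ⟨hzy, hzB⟩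
              have hzD' : z ∈ D := (hzDh z hzy).mp hzD
              exact absurd (Finset.mem_inter.mpr ⟨this, hzD'⟩) (by simp [h])
          · -- f B ⊆ D : show B ⊆ Dh
            refine Or.inr (Or.inl ?_)
            intro z hzB
            by_cases hzy : z = y
            · subst hzy
              have hxB : x ∈ f B := Finset.mem_erase.mpr ⟨hxy, hxyB'.mpr hzB⟩
              exact hyDh.mpr (h hxB)
            · exact (hzDh z hzy).mpr (h (Finset.mem_erase.mpr ⟨hzy, hzB⟩))
          · -- D ⊆ f B : show Dh ⊆ B
            refine Or.inr (Or.inr ?_)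
            intro z hzD
            by_cases hzy : z = y
            · subst hzy
              have hxD : x ∈ D := hyDh.mp hzD
              have : x ∈ f B := h hxD
              exact hxyB'.mp (Finset.mem_erase.mp this).2
            · exact Finset.erase_subset y B (h ((hzDh z hzy).mp hzD))
      have hDhF : Dh ∈ F := hmax Dh hDhS hDh2 hDhle hDhcomp
      have hDhM : Dh ≠ M := by
        intro h
        by_cases hx : x ∈ D
        · have : y ∈ Dh := hyDh.mpr hx
          have hD1 : D = Dh.erase y := by
            ext z
            rw [Finset.mem_erase]
            constructor
            · intro hz; exact ⟨fun hzy => hyD (hzy ▸ hz), hDsub hz⟩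
            · intro ⟨hz1, hz2⟩; exact (hzDh z hz1).mp hz2
          rw [h, hMxy] at hD1
          have : D = {x} := by
            rw [hD1]
            ext z
            simp only [Finset.mem_erase, Finset.mem_insert, Finset.mem_singleton]
            constructor
            · rintro ⟨h1, h2 | h2⟩
              · exact h2
              · exact absurd h2 h1
            · rintro rfl; exact ⟨hxy, Or.inl rfl⟩
          rw [this] at hD2
          simp at hD2
        · have : Dh = D := by rw [hDh, if_neg hx]
          rw [this] at h
          exact hx (h ▸ hxM)
      have hDerase : f Dh = D := by
        rw [hf]
        ext z
        rw [Finset.mem_erase]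
        constructor
        · intro ⟨h1, h2⟩; exact (hzDh z h1).mp h2
        · intro hz
          have hzy : z ≠ y := fun h => hyD (h ▸ hz)
          exact ⟨hzy, hDsub hz⟩
      rw [hF', Finset.mem_image]
      exact ⟨Dh, Finset.mem_erase.mpr ⟨hDhM, hDhF⟩, hDerase⟩
    have := IH S' hS'card F' hmem' hcomp' hmax'
    have hFpos : 1 ≤ F.card := Finset.card_pos.mpr hne
    omega

lemma inter_compl_empty_iff {α : Type*} [Fintype α] [DecidableEq α]
    (A B : Finset α) : A ∩ Bᶜ = ∅ ↔ A ⊆ B := by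
  simp only [Finset.eq_empty_iff_forall_notMem, Finset.mem_inter, Finset.mem_compl,
    Finset.subset_iff]
  constructor
  · intro h a ha
    by_contra hb
    exact h a ⟨ha, hb⟩
  · rintro h a ⟨ha, hb⟩
    exact hb (h ha)



/-- The complex of phylogenetic trees `Θ(n)` (`n ≥ 4`) is a pure flag
simplicial complex of dimension `n − 4`.  Its vertices are the splits `{A, Aᶜ}` of `[n]`
with `|A|, |Aᶜ| ≥ 2` (normalized so that `0 ∉ A`), and its faces are the pairwise
compatible sets of splits, where splits `{A,B}`, `{A',B'}` are compatible iff one of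
`A∩A'`, `A∩B'`, `B∩A'`, `B∩B'` is empty.  We state: every maximal face has exactly
`n − 3` vertices (purity of dimension `n − 4`, so facets correspond to trivalent trees
with `n − 3` internal edges), and every minimal non-face has exactly `2` vertices
(flagness). -/
theorem phylo_complex_pure_and_flag (n : ℕ) (hn : 4 ≤ n) :
    let Vtx := {A : Finset (Fin n) // 2 ≤ A.card ∧ A.card ≤ n - 2 ∧
      (⟨0, by omega⟩ : Fin n) ∉ A}
    let compat : Vtx → Vtx → Prop := fun A B =>
      A.1 ∩ B.1 = ∅ ∨ A.1 ∩ B.1ᶜ = ∅ ∨ A.1ᶜ ∩ B.1 = ∅ ∨ A.1ᶜ ∩ B.1ᶜ = ∅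
    (∀ F : Finset Vtx, (∀ A ∈ F, ∀ B ∈ F, compat A B) →
      (∀ F' : Finset Vtx, F ⊆ F' → (∀ A ∈ F', ∀ B ∈ F', compat A B) → F' = F) →
      F.card = n - 3) ∧
    (∀ F : Finset Vtx, ¬ (∀ A ∈ F, ∀ B ∈ F, compat A B) →
      (∀ F' : Finset Vtx, F' ⊂ F → (∀ A ∈ F', ∀ B ∈ F', compat A B)) →
      F.card = 2) := by
  intro Vtx compat
  have hzero : ∀ A B : Vtx, A.1ᶜ ∩ B.1ᶜ ≠ ∅ := by
    intro A B h
    have hmem : (⟨0, by omega⟩ : Fin n) ∈ A.1ᶜ ∩ B.1ᶜ :=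
      Finset.mem_inter.mpr ⟨Finset.mem_compl.mpr A.2.2.2, Finset.mem_compl.mpr B.2.2.2⟩
    rw [h] at hmem
    exact absurd hmem (Finset.notMem_empty _)
  have hiff : ∀ A B : Vtx, compat A B ↔ lcompat A.1 B.1 := by
    intro A B
    constructor
    · rintro (h | h | h | h)
      · exact Or.inl h
      · exact Or.inr (Or.inl ((inter_compl_empty_iff _ _).mp h))
      · exact Or.inr (Or.inr ((inter_compl_empty_iff _ _).mp (by rwa [Finset.inter_comm] at h)))
      · exact absurd h (hzero A B)
    · rintro (h | h | h)
      · exact Or.inl h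
      · exact Or.inr (Or.inl ((inter_compl_empty_iff _ _).mpr h))
      · exact Or.inr (Or.inr (Or.inl (by rw [Finset.inter_comm]; exact (inter_compl_empty_iff _ _).mpr h)))
  have hrefl : ∀ A : Vtx, compat A A := fun A => (hiff A A).mpr (Or.inr (Or.inl subset_rfl))
  constructor
  · -- purity
    intro F h1 h2
    set z : Fin n := ⟨0, by omega⟩ with hz
    set S : Finset (Fin n) := Finset.univ.erase z with hSdef
    have hScard : S.card = n - 1 := by
      rw [hSdef, Finset.card_erase_of_mem (Finset.mem_univ z), Finset.card_univ,
        Fintype.card_fin]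
    set G : Finset (Finset (Fin n)) := F.image Subtype.val with hGdef
    have hGcard : G.card = F.card :=
      Finset.card_image_of_injective F Subtype.val_injective
    have key : G.card = (n - 1) - 2 := by
      apply laminar_max_card (n - 1) (by omega) S hScard G
      · intro A hA
        rw [hGdef, Finset.mem_image] at hA
        obtain ⟨v, hv, rfl⟩ := hA
        refine ⟨Finset.subset_erase.mpr ⟨Finset.subset_univ _, v.2.2.2⟩, v.2.1, by
          have := v.2.2.1; omega⟩
      · intro A hA B hB
        rw [hGdef, Finset.mem_image] at hA hB
        obtain ⟨u, hu, rfl⟩ := hA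
        obtain ⟨w, hw, rfl⟩ := hB
        exact (hiff u w).mp (h1 u hu w hw)
      · intro B hBS hB2 hBle hBcomp
        have hzB : z ∉ B := fun h => (Finset.mem_erase.mp (hBS h)).1 rfl
        have hBle' : B.card ≤ n - 2 := by omega
        set v : Vtx := ⟨B, hB2, hBle', hzB⟩ with hv
        have hcompF' : ∀ A ∈ insert v F, ∀ C ∈ insert v F, compat A C := by
          intro A hA C hC
          rcases Finset.mem_insert.mp hA with rfl | hA <;>
            rcases Finset.mem_insert.mp hC with rfl | hC
          · exact hrefl _
          · exact (hiff _ _).mpr (lcompat_symm (hBcomp C.1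
              (Finset.mem_image.mpr ⟨C, hC, rfl⟩)))
          · exact (hiff _ _).mpr (hBcomp A.1 (Finset.mem_image.mpr ⟨A, hA, rfl⟩))
          · exact h1 A hA C hC
        have := h2 (insert v F) (Finset.subset_insert v F) hcompF'
        have hvF : v ∈ F := this ▸ Finset.mem_insert_self v F
        exact Finset.mem_image.mpr ⟨v, hvF, rfl⟩
    omega
  · -- flagness
    intro F h1 h2
    push_neg at h1
    obtain ⟨A, hA, B, hB, hAB⟩ := h1
    have hne : A ≠ B := fun h => hAB (h ▸ hrefl A)
    have hsub : ({A, B} : Finset Vtx) ⊆ F := by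
      intro x hx
      rcases Finset.mem_insert.mp hx with rfl | hx
      · exact hA
      · exact (Finset.mem_singleton.mp hx) ▸ hB
    have hnss : ¬ ({A, B} : Finset Vtx) ⊂ F := by
      intro h
      exact hAB (h2 _ h A (by simp) B (by simp))
    have hEq : ({A, B} : Finset Vtx) = F := by
      by_contra h
      exact hnss (Finset.ssubset_iff_subset_ne.mpr ⟨hsub, h⟩)
    rw [← hEq, Finset.card_insert_of_notMem (by simp [hne]), Finset.card_singleton]
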